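/- arXiv:1803.07609 — 3 statements merged into one kernel-verified Lean document; each statement's English description precedes it below -/
import Mathlib

section
/- The category of phylogenetic trees with n leaves is a poset: between any two phylogenetic trees (X,f,ℓ) and (Y,g,μ) there is at most one morphism. -/
private lemma aux_mono {Z : Type*} (root : Z) (parent : Z → Z) (h : Z → ℝ)
    (hroot : parent root = root) (hlt : ∀ z, z ≠ root → h z < h (parent z)) :
    ∀ (m : ℕ) (z : Z), h z ≤ h (parent^[m] z) := by
  intro m z
  induction m with
  | zero => simp
  | succ k ih =>
    rw [Function.iterate_succ_apply']
    refine ih.trans ?_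
    by_cases hz : parent^[k] z = root
    · rw [hz, hroot]
    · exact (hlt _ hz).le

private lemma aux_fix {Z : Type*} (root : Z) (parent : Z → Z) (h : Z → ℝ)
    (hroot : parent root = root) (hlt : ∀ z, z ≠ root → h z < h (parent z)) :
    ∀ (m : ℕ) (z : Z), h (parent^[m] z) = h z → parent^[m] z = z := by
  intro m
  induction m with
  | zero => simp
  | succ k ih =>
    intro z hz
    have h1 : h z ≤ h (parent^[k] z) := aux_mono root parent h hroot hlt k z
    have h2 : h (parent^[k] z) ≤ h (parent^[k+1] z) := by
      rw [Function.iterate_succ_apply']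
      by_cases hz' : parent^[k] z = root
      · rw [hz', hroot]
      · exact (hlt _ hz').le
    have heq : h (parent^[k] z) = h z := le_antisymm (by linarith [hz]) h1
    have hfix : parent^[k] z = z := ih z heq
    have hr : z = root := by
      by_contra hne
      have := hlt z hne
      rw [Function.iterate_succ_apply', hfix] at hz
      linarith
    rw [Function.iterate_succ_apply', hfix, hr, hroot]

/-- The category of phylogenetic trees with n leaves is a poset: any two parallel
morphisms (function-, order-, and label-preserving maps) coincide. Here merge trees are
modeled as finite rooted trees with height functions, ancestor order
`x ≤ y ↔ ∃ k, parent^[k] x = y`, and every leaf of X is labeled. -/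
theorem stmt7 {X Y : Type*} [Fintype X]
    (rootX : X) (parentX : X → X) (f : X → ℝ)
    (hrootX : parentX rootX = rootX)
    (hltX : ∀ x, x ≠ rootX → f x < f (parentX x))
    (hreachX : ∀ x, ∃ k, parentX^[k] x = rootX)
    (rootY : Y) (parentY : Y → Y) (g : Y → ℝ)
    (hrootY : parentY rootY = rootY)
    (hltY : ∀ y, y ≠ rootY → g y < g (parentY y))
    (hreachY : ∀ y, ∃ k, parentY^[k] y = rootY)
    (n : ℕ) (ℓ : Fin n → X) (μ : Fin n → Y)
    (hleaf : ∀ x : X, (∀ w, (∃ k, parentX^[k] w = x) → w = x) → ∃ i, ℓ i = x)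
    (φ ψ : X → Y)
    (hφf : ∀ x, g (φ x) = f x) (hψf : ∀ x, g (ψ x) = f x)
    (hφm : ∀ x₁ x₂, (∃ k, parentX^[k] x₁ = x₂) → ∃ k, parentY^[k] (φ x₁) = φ x₂)
    (hψm : ∀ x₁ x₂, (∃ k, parentX^[k] x₁ = x₂) → ∃ k, parentY^[k] (ψ x₁) = ψ x₂)
    (hφl : ∀ i, ∃ k, parentY^[k] (μ i) = φ (ℓ i))
    (hψl : ∀ i, ∃ k, parentY^[k] (μ i) = ψ (ℓ i)) :
    φ = ψ := by
  classical
  funext x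
  -- find a minimal element (leaf) below x
  obtain ⟨w, hwS, hwmin⟩ := Finset.exists_min_image
    (Finset.univ.filter (fun w => ∃ k, parentX^[k] w = x)) f
    ⟨x, by simp; exact ⟨0, rfl⟩⟩
  simp only [Finset.mem_filter, Finset.mem_univ, true_and] at hwS
  obtain ⟨kx, hkx⟩ := hwS
  have hwleaf : ∀ w', (∃ k, parentX^[k] w' = w) → w' = w := by
    rintro w' ⟨k, hk⟩
    have hmem : w' ∈ Finset.univ.filter (fun w => ∃ k, parentX^[k] w = x) := by
      simp only [Finset.mem_filter, Finset.mem_univ, true_and]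
      exact ⟨kx + k, by rw [Function.iterate_add_apply, hk, hkx]⟩
    have h1 : f w ≤ f w' := hwmin w' hmem
    have h2 : f w' ≤ f (parentX^[k] w') := aux_mono rootX parentX f hrootX hltX k w'
    rw [hk] at h2
    have := aux_fix rootX parentX f hrootX hltX k w' (by rw [hk]; linarith)
    rw [this] at hk; exact hk
  obtain ⟨i, hi⟩ := hleaf w hwleaf
  -- φ x and ψ x are both above μ i
  obtain ⟨a, ha⟩ := hφl i
  obtain ⟨b, hb⟩ := hψl i
  obtain ⟨c, hc⟩ := hφm (ℓ i) x ⟨kx, by rw [hi, hkx]⟩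
  obtain ⟨d, hd⟩ := hψm (ℓ i) x ⟨kx, by rw [hi, hkx]⟩
  have hφx : parentY^[c + a] (μ i) = φ x := by
    rw [Function.iterate_add_apply, ha, hc]
  have hψx : parentY^[d + b] (μ i) = ψ x := by
    rw [Function.iterate_add_apply, hb, hd]
  have hg : g (φ x) = g (ψ x) := by rw [hφf, hψf]
  rcases le_total (c + a) (d + b) with hle | hle
  · have h3 : parentY^[(d + b) - (c + a)] (φ x) = ψ x := by
      rw [← hφx, ← Function.iterate_add_apply, Nat.sub_add_cancel hle, hψx]
    have h4 := aux_fix rootY parentY g hrootY hltY _ (φ x) (by rw [h3, ← hg])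
    rw [h4] at h3; exact h3
  · have h3 : parentY^[(c + a) - (d + b)] (ψ x) = φ x := by
      rw [← hψx, ← Function.iterate_add_apply, Nat.sub_add_cancel hle, hφx]
    have h4 := aux_fix rootY parentY g hrootY hltY _ (ψ x) (by rw [h3, hg])
    rw [h4] at h3; exact h3.symm
end

section
/- If (X,f,ℓ) ⪯ (Y,g,μ) in the poset of phylogenetic trees with n leaves (i.e., there exists a morphism φ from (X,f,ℓ) to (Y,g,μ)), then the cophenetic vectors satisfy C(X,f,ℓ) ≥ C(Y,g,μ) componentwise; that is, f(ℓ(i) ∨ ℓ(j)) ≥ g(μ(i) ∨ μ(j)) for all 1 ≤ i ≤ j ≤ n. -/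
/-- If there is a morphism of phylogenetic trees (X,f,ℓ) → (Y,g,μ), then the cophenetic
vectors satisfy C(X,f,ℓ) ≥ C(Y,g,μ) componentwise:
f(ℓ(i) ∨ ℓ(j)) ≥ g(μ(i) ∨ μ(j)) for all i ≤ j. -/
theorem stmt8 {X Y : Type*} [SemilatticeSup X] [SemilatticeSup Y]
    (n : ℕ) (f : X → ℝ) (g : Y → ℝ) (hg : Monotone g)
    (ℓ : Fin n → X) (μ : Fin n → Y)
    (φ : X → Y) (hmono : Monotone φ)
    (hfun : ∀ x, g (φ x) = f x)
    (hlabel : ∀ i, μ i ≤ φ (ℓ i)) :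
    ∀ i j : Fin n, i ≤ j → g (μ i ⊔ μ j) ≤ f (ℓ i ⊔ ℓ j) := by
  intro i j _
  have h : μ i ⊔ μ j ≤ φ (ℓ i ⊔ ℓ j) :=
    sup_le ((hlabel i).trans (hmono le_sup_left))
      ((hlabel j).trans (hmono le_sup_right))
  calc g (μ i ⊔ μ j) ≤ g (φ (ℓ i ⊔ ℓ j)) := hg h
    _ = f (ℓ i ⊔ ℓ j) := hfun _
end

section
/- The interleaving distance on phylogenetic trees with n leaves induced by the ε-smoothing flow equals the ℓ∞-cophenetic metric: d((X,f,ℓ),(Y,g,μ)) = max_{1 ≤ i ≤ j ≤ n} |f(ℓ(i) ∨ ℓ(j)) − g(μ(i) ∨ μ(j))|, provided the cophenetic map is full (a morphism T → U_ε T' exists whenever C(T) ≥ C(T') − ε componentwise). -/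
/-- Given trees `A` with an ε-smoothing `U`, a morphism relation `r`, and a cophenetic
map `C` satisfying: (1) a morphism `r T T'` forces `C T' ≤ C T` componentwise,
(2) `C (U ε T) = C T - ε`, and (3) fullness: `C T' - ε ≤ C T` componentwise implies
`r T (U ε T')`, the interleaving distance induced by the smoothing flow equals the
ℓ∞-cophenetic metric. -/
theorem stmt11 {A : Type*} (n : ℕ) (hn : 0 < n)
    (r : A → A → Prop) (U : ℝ → A → A) (C : A → Fin n → Fin n → ℝ)
    (h1 : ∀ T T' : A, r T T' → ∀ i j, C T' i j ≤ C T i j)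
    (h2 : ∀ (ε : ℝ) (T : A) (i j : Fin n), 0 ≤ ε → C (U ε T) i j = C T i j - ε)
    (h3 : ∀ (ε : ℝ) (T T' : A), 0 ≤ ε →
      (∀ i j, C T' i j - ε ≤ C T i j) → r T (U ε T')) :
    ∀ T T' : A,
      sInf {ε : ℝ | 0 ≤ ε ∧ r T (U ε T') ∧ r T' (U ε T)} =
        Finset.univ.sup' (Finset.univ_nonempty_iff.mpr ⟨(⟨0, hn⟩, ⟨0, hn⟩)⟩)
          (fun p : Fin n × Fin n => |C T p.1 p.2 - C T' p.1 p.2|) := by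
  intro T T'
  set ne : (Finset.univ : Finset (Fin n × Fin n)).Nonempty := Finset.univ_nonempty_iff.mpr ⟨(⟨0, hn⟩, ⟨0, hn⟩)⟩
  set M := Finset.univ.sup' ne (fun p : Fin n × Fin n => |C T p.1 p.2 - C T' p.1 p.2|) with hM
  have hle : ∀ i j, |C T i j - C T' i j| ≤ M := fun i j =>
    Finset.le_sup' (f := fun p : Fin n × Fin n => |C T p.1 p.2 - C T' p.1 p.2|)
      (Finset.mem_univ (i, j))
  have hM0 : 0 ≤ M := le_trans (abs_nonneg _) (hle ⟨0, hn⟩ ⟨0, hn⟩)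
  apply IsLeast.csInf_eq
  constructor
  · refine ⟨hM0, h3 M T T' hM0 ?_, h3 M T' T hM0 ?_⟩
    · intro i j
      have := (abs_le.mp (hle i j)).1
      linarith
    · intro i j
      have := (abs_le.mp (hle i j)).2
      linarith
  · rintro ε ⟨hε0, hr1, hr2⟩
    have key : ∀ p : Fin n × Fin n,
        |C T p.1 p.2 - C T' p.1 p.2| ≤ ε := by
      rintro ⟨i, j⟩
      have a1 := h1 T (U ε T') hr1 i j
      have a2 := h1 T' (U ε T) hr2 i j
      rw [h2 ε T' i j hε0] at a1
      rw [h2 ε T i j hε0] at a2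
      rw [abs_le]
      constructor <;> linarith
    exact Finset.sup'_le _ _ fun p _ => key p
end
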